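/- Let A : X → SL(2,ℂ) be continuous on a compact metric space X with homeomorphism f and f-invariant probability measure μ, and suppose there exist a Borel map 𝓑 : X → SL(2,ℂ) bounded with bounded inverse, and a Borel function γ : X → ℂ∖{0} bounded away from 0 and ∞, such that 𝓑(f(x)) A(x) 𝓑(x)⁻¹ = diag(γ(x), γ(x)⁻¹) for all x, and |γ_n(x)| → ∞ uniformly in x where γ_n(x) = Π_{k<n} γ(f^k(x)). Then the Lyapunov exponent L(A) = lim_{n→∞} (1/n)∫ ln‖A_n(x)‖ dμ equals ∫_X ln|γ(x)| dμ(x). -/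

import Mathlib

open MeasureTheory Matrix Filter

attribute [local instance] Matrix.normedAddCommGroup

lemma aux_norm_mul_le (M N : Matrix (Fin 2) (Fin 2) ℂ) : ‖M * N‖ ≤ 2 * ‖M‖ * ‖N‖ := by
  have h0 : (0:ℝ) ≤ 2 * ‖M‖ * ‖N‖ := by positivity
  rw [Matrix.norm_le_iff h0]
  intro i j
  rw [Matrix.mul_apply]
  calc ‖∑ k, M i k * N k j‖ ≤ ∑ k, ‖M i k * N k j‖ := norm_sum_le _ _
    _ ≤ ∑ _k : Fin 2, ‖M‖ * ‖N‖ := Finset.sum_le_sum (fun k _ => by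
        rw [norm_mul]
        exact mul_le_mul (Matrix.norm_entry_le_entrywise_sup_norm M)
          (Matrix.norm_entry_le_entrywise_sup_norm N) (norm_nonneg _) (norm_nonneg _))
    _ = 2 * ‖M‖ * ‖N‖ := by simp; ring

lemma aux_norm_pos (M : Matrix (Fin 2) (Fin 2) ℂ) (h : M.det = 1) : 0 < ‖M‖ := by
  by_contra hn
  push_neg at hn
  have h0 : ‖M‖ = 0 := le_antisymm hn (norm_nonneg _)
  have h1 : M = 0 := norm_eq_zero.mp h0
  rw [h1] at h
  simp [Matrix.det_fin_two] at h

lemma aux_diag_norm (a : ℂ) (ha : 1 ≤ ‖a‖) :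
    ‖(!![a, 0; 0, a⁻¹] : Matrix (Fin 2) (Fin 2) ℂ)‖ = ‖a‖ := by
  have ha0 : a ≠ 0 := by
    intro h; rw [h] at ha; simp at ha; linarith
  apply le_antisymm
  · rw [Matrix.norm_le_iff (by linarith)]
    intro i j
    fin_cases i <;> fin_cases j <;>
      simp [map_inv₀]
    all_goals first
      | rfl
      | linarith
      | exact le_trans (inv_le_one_of_one_le₀ ha) ha
  · have := Matrix.norm_entry_le_entrywise_sup_norm
      (A := (!![a, 0; 0, a⁻¹] : Matrix (Fin 2) (Fin 2) ℂ)) (i := 0) (j := 0)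
    simpa using this

/-- Suppose the continuous `SL(2,ℂ)`-cocycle `A` over `(f, μ)` is conjugated, by a Borel
map `𝓑` bounded with bounded inverse, to the diagonal cocycle `diag(γ, γ⁻¹)` where `γ` is
Borel, bounded away from `0` and `∞`, and `|γₙ| → ∞` uniformly. Then the Lyapunov exponent
`L(A) = lim (1/n)∫ ln‖Aₙ‖ dμ` equals `∫ ln|γ| dμ`. -/
theorem stmt16 {X : Type*} [MetricSpace X] [CompactSpace X]
    [MeasurableSpace X] [BorelSpace X]
    (f : X ≃ₜ X) (μ : Measure X) [IsProbabilityMeasure μ]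
    (hf : MeasurePreserving (f : X → X) μ μ)
    (A : X → Matrix (Fin 2) (Fin 2) ℂ) (hA : Continuous A) (hdet : ∀ x, (A x).det = 1)
    (An : ℕ → X → Matrix (Fin 2) (Fin 2) ℂ)
    (hAn0 : ∀ x, An 0 x = 1)
    (hAnS : ∀ n x, An (n + 1) x = A ((f : X → X)^[n] x) * An n x)
    (B Binv : X → Matrix (Fin 2) (Fin 2) ℂ)
    (hBm : ∀ i j, Measurable fun x => B x i j) (hBinvm : ∀ i j, Measurable fun x => Binv x i j)
    (hBinv : ∀ x, B x * Binv x = 1 ∧ Binv x * B x = 1)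
    (MB : ℝ) (hMB : ∀ x, ‖B x‖ ≤ MB ∧ ‖Binv x‖ ≤ MB)
    (γ : X → ℂ) (hγm : Measurable γ) (cl cu : ℝ) (hcl : 0 < cl)
    (hγbd : ∀ x, cl ≤ ‖γ x‖ ∧ ‖γ x‖ ≤ cu)
    (hconj : ∀ x, B (f x) * A x * Binv x = !![γ x, 0; 0, (γ x)⁻¹])
    (hgrow : ∀ K : ℝ, ∃ N : ℕ, ∀ n ≥ N, ∀ x,
      K ≤ ‖∏ k ∈ Finset.range n, γ ((f : X → X)^[k] x)‖) :
    Tendsto (fun n : ℕ => (1 / (n : ℝ)) * ∫ x, Real.log ‖An n x‖ ∂μ)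
      atTop (nhds (∫ x, Real.log (‖γ x‖) ∂μ)) := by
  classical
  set M : ℝ := max MB 1 with hMdef
  have hM1 : (1:ℝ) ≤ M := le_max_right _ _
  have hBM : ∀ x, ‖B x‖ ≤ M := fun x => le_trans (hMB x).1 (le_max_left _ _)
  have hBinvM : ∀ x, ‖Binv x‖ ≤ M := fun x => le_trans (hMB x).2 (le_max_left _ _)
  set C : ℝ := Real.log (4 * M ^ 2) with hCdef
  have h4M : (1:ℝ) ≤ 4 * M ^ 2 := by nlinarith
  have hC0 : 0 ≤ C := Real.log_nonneg h4M
  -- γ nonzero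
  have hγ0 : ∀ x, γ x ≠ 0 := by
    intro x hx
    have := (hγbd x).1
    rw [hx] at this; simp at this; linarith
  set gp : ℕ → X → ℂ := fun n x => ∏ k ∈ Finset.range n, γ ((f : X → X)^[k] x) with hgp
  have hgp0 : ∀ n x, gp n x ≠ 0 := fun n x =>
    Finset.prod_ne_zero_iff.mpr fun k _ => hγ0 _
  -- continuity of An
  have hAncont : ∀ n, Continuous (An n) := by
    intro n
    induction n with
    | zero =>
      have : An 0 = fun _ => 1 := funext hAn0
      rw [this]; exact continuous_const
    | succ n ih =>
      have : An (n+1) = fun x => A ((f : X → X)^[n] x) * An n x := funext (hAnS n)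
      rw [this]
      exact Continuous.matrix_mul (hA.comp (f.continuous.iterate n)) ih
  have hdetAn : ∀ n x, (An n x).det = 1 := by
    intro n
    induction n with
    | zero => intro x; simp [hAn0]
    | succ n ih => intro x; rw [hAnS, Matrix.det_mul, hdet, ih, one_mul]
  have hAnpos : ∀ n x, 0 < ‖An n x‖ := fun n x => aux_norm_pos _ (hdetAn n x)
  -- conjugation identity
  have hconjn : ∀ n x, B ((f : X → X)^[n] x) * An n x * Binv x
      = !![gp n x, 0; 0, (gp n x)⁻¹] := by
    intro n
    induction n with
    | zero =>
      intro x
      simp only [Function.iterate_zero, id_eq, hAn0, Matrix.mul_one, hgp,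
        Finset.range_zero, Finset.prod_empty]
      rw [(hBinv x).1, Matrix.one_fin_two, inv_one]
    | succ n ih =>
      intro x
      set y := (f : X → X)^[n] x with hy
      have step : B ((f : X → X)^[n+1] x) * An (n+1) x * Binv x
          = (B (f y) * A y * Binv y) * (B y * An n x * Binv x) := by
        rw [Function.iterate_succ_apply', hAnS]
        simp only [Matrix.mul_assoc]
        rw [← Matrix.mul_assoc (Binv y) (B y), (hBinv y).2, Matrix.one_mul]
      rw [step, hconj y, ih x, Matrix.mul_fin_two]
      have hprod : gp (n+1) x = γ y * gp n x := by
        rw [hgp, hy]; simp [Finset.prod_range_succ, mul_comm]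
      rw [hprod, mul_inv]
      norm_num
  -- pointwise log bound
  obtain ⟨N, hN⟩ := hgrow 1
  have hkey : ∀ n ≥ N, ∀ x,
      |Real.log ‖An n x‖ - Real.log (‖gp n x‖)| ≤ C := by
    intro n hn x
    have hγn1 : 1 ≤ ‖gp n x‖ := hN n hn x
    set D : Matrix (Fin 2) (Fin 2) ℂ := !![gp n x, 0; 0, (gp n x)⁻¹] with hD
    have hDnorm : ‖D‖ = ‖gp n x‖ := aux_diag_norm _ hγn1
    have hDpos : (1:ℝ) ≤ ‖D‖ := by rw [hDnorm]; exact hγn1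
    have h1 : ‖D‖ ≤ 4 * M ^ 2 * ‖An n x‖ := by
      calc ‖D‖ = ‖B ((f : X → X)^[n] x) * An n x * Binv x‖ := by rw [hconjn n x]
        _ ≤ 2 * ‖B ((f : X → X)^[n] x) * An n x‖ * ‖Binv x‖ := aux_norm_mul_le _ _
        _ ≤ 2 * (2 * ‖B ((f : X → X)^[n] x)‖ * ‖An n x‖) * ‖Binv x‖ := by
            have := aux_norm_mul_le (B ((f : X → X)^[n] x)) (An n x)
            have hBp : (0:ℝ) ≤ ‖Binv x‖ := norm_nonneg _
            nlinarith [norm_nonneg (B ((f : X → X)^[n] x) * An n x)]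
        _ ≤ 4 * M ^ 2 * ‖An n x‖ := by
            have h1 := hBM ((f : X → X)^[n] x)
            have h2 := hBinvM x
            have h3 := (hAnpos n x).le
            have h4 : (0:ℝ) ≤ ‖B ((f : X → X)^[n] x)‖ := norm_nonneg _
            have h5 : (0:ℝ) ≤ ‖Binv x‖ := norm_nonneg _
            have h6 : ‖B ((f : X → X)^[n] x)‖ * ‖Binv x‖ ≤ M * M :=
              mul_le_mul h1 h2 h5 (by linarith)
            nlinarith [mul_le_mul_of_nonneg_right h6 h3]
    have hAeq : An n x = Binv ((f : X → X)^[n] x) * D * B x := by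
      rw [hD, ← hconjn n x]
      simp only [Matrix.mul_assoc]
      rw [(hBinv x).2, Matrix.mul_one, ← Matrix.mul_assoc,
        (hBinv ((f : X → X)^[n] x)).2, Matrix.one_mul]
    have h2 : ‖An n x‖ ≤ 4 * M ^ 2 * ‖D‖ := by
      calc ‖An n x‖ = ‖Binv ((f : X → X)^[n] x) * D * B x‖ := by rw [← hAeq]
        _ ≤ 2 * ‖Binv ((f : X → X)^[n] x) * D‖ * ‖B x‖ := aux_norm_mul_le _ _
        _ ≤ 2 * (2 * ‖Binv ((f : X → X)^[n] x)‖ * ‖D‖) * ‖B x‖ := by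
            have := aux_norm_mul_le (Binv ((f : X → X)^[n] x)) D
            nlinarith [norm_nonneg (Binv ((f : X → X)^[n] x) * D), norm_nonneg (B x)]
        _ ≤ 4 * M ^ 2 * ‖D‖ := by
            have h1 := hBinvM ((f : X → X)^[n] x)
            have h2 := hBM x
            have h3 : (0:ℝ) ≤ ‖D‖ := by linarith
            have h4 : (0:ℝ) ≤ ‖Binv ((f : X → X)^[n] x)‖ := norm_nonneg _
            have h5 : (0:ℝ) ≤ ‖B x‖ := norm_nonneg _
            have h6 : ‖Binv ((f : X → X)^[n] x)‖ * ‖B x‖ ≤ M * M :=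
              mul_le_mul h1 h2 h5 (by linarith)
            nlinarith [mul_le_mul_of_nonneg_right h6 h3]
    rw [← hDnorm]
    have hl1 : Real.log ‖An n x‖ ≤ C + Real.log ‖D‖ := by
      calc Real.log ‖An n x‖ ≤ Real.log (4 * M ^ 2 * ‖D‖) :=
            Real.log_le_log (hAnpos n x) h2
        _ = C + Real.log ‖D‖ := Real.log_mul (by positivity) (by linarith)
    have hl2 : Real.log ‖D‖ ≤ C + Real.log ‖An n x‖ := by
      calc Real.log ‖D‖ ≤ Real.log (4 * M ^ 2 * ‖An n x‖) :=
            Real.log_le_log (by linarith) h1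
        _ = C + Real.log ‖An n x‖ := Real.log_mul (by positivity) (ne_of_gt (hAnpos n x))
    rw [abs_le]
    constructor <;> linarith
  -- integrability
  have hintAn : ∀ n, Integrable (fun x => Real.log ‖An n x‖) μ := by
    intro n
    have hcont : Continuous fun x => Real.log ‖An n x‖ := by
      rw [continuous_iff_continuousAt]
      intro x
      exact ContinuousAt.comp (f := fun x => ‖An n x‖) (g := Real.log)
        (Real.continuousAt_log (ne_of_gt (hAnpos n x))) ((hAncont n).norm.continuousAt)
    have := hcont.continuousOn.integrableOn_compact' (μ := μ) isCompact_univ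
      MeasurableSet.univ
    rwa [integrableOn_univ] at this
  have hlogγbd : ∀ x, |Real.log (‖γ x‖)| ≤ max |Real.log cl| |Real.log cu| := by
    intro x
    rcases hγbd x with ⟨h1, h2⟩
    have hll : Real.log cl ≤ Real.log (‖γ x‖) := Real.log_le_log hcl h1
    have hlu : Real.log (‖γ x‖) ≤ Real.log cu :=
      Real.log_le_log (lt_of_lt_of_le hcl h1) h2
    rw [abs_le]
    constructor
    · calc -(max |Real.log cl| |Real.log cu|) ≤ -|Real.log cl| := by
            simp [le_max_left]
        _ ≤ Real.log cl := neg_abs_le _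
        _ ≤ _ := hll
    · exact le_trans hlu (le_trans (le_abs_self _) (le_max_right _ _))
  have hmlogγ : ∀ k : ℕ, Measurable fun x => Real.log (‖γ ((f : X → X)^[k] x)‖) := by
    intro k
    have hfm : Measurable ((f : X → X)^[k]) := (f.continuous.iterate k).measurable
    exact Real.measurable_log.comp ((continuous_norm.measurable.comp hγm).comp hfm)
  have hintγk : ∀ k : ℕ, Integrable (fun x => Real.log (‖γ ((f : X → X)^[k] x)‖)) μ := by
    intro k
    refine Integrable.mono' (integrable_const (max |Real.log cl| |Real.log cu|))
      (hmlogγ k).aestronglyMeasurable (ae_of_all _ fun x => ?_)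
    rw [Real.norm_eq_abs]
    exact hlogγbd _
  -- integral under iteration
  have hiter : ∀ k : ℕ, ∫ x, Real.log (‖γ ((f : X → X)^[k] x)‖) ∂μ
      = ∫ x, Real.log (‖γ x‖) ∂μ := by
    intro k
    induction k with
    | zero => simp
    | succ k ih =>
      have : ∀ x : X, Real.log (‖γ ((f : X → X)^[k+1] x)‖)
          = (fun x => Real.log (‖γ ((f : X → X)^[k] x)‖)) ((f : X → X) x) := by
        intro x; rw [Function.iterate_succ_apply]
      rw [funext this] at *
      rw [hf.integral_comp f.measurableEmbedding
        (fun x => Real.log (‖γ ((f : X → X)^[k] x)‖)), ih]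
  -- sum formula for log of gp
  have hgsum : ∀ n x, Real.log (‖gp n x‖)
      = ∑ k ∈ Finset.range n, Real.log (‖γ ((f : X → X)^[k] x)‖) := by
    intro n x
    rw [hgp]
    simp only [norm_prod]
    exact Real.log_prod fun k _ => by
      simp only [ne_eq, norm_eq_zero]
      exact fun h => hγ0 _ h
  have hintg : ∀ n, Integrable (fun x => Real.log (‖gp n x‖)) μ := by
    intro n
    have : (fun x => Real.log (‖gp n x‖))
        = fun x => ∑ k ∈ Finset.range n, Real.log (‖γ ((f : X → X)^[k] x)‖) :=
      funext fun x => hgsum n x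
    rw [this]
    exact integrable_finset_sum _ fun k _ => hintγk k
  have hgint : ∀ n : ℕ, ∫ x, Real.log (‖gp n x‖) ∂μ
      = (n : ℝ) * ∫ x, Real.log (‖γ x‖) ∂μ := by
    intro n
    calc ∫ x, Real.log (‖gp n x‖) ∂μ
        = ∫ x, ∑ k ∈ Finset.range n, Real.log (‖γ ((f : X → X)^[k] x)‖) ∂μ := by
          congr 1; exact funext fun x => hgsum n x
      _ = ∑ k ∈ Finset.range n, ∫ x, Real.log (‖γ ((f : X → X)^[k] x)‖) ∂μ :=
          integral_finset_sum _ fun k _ => hintγk k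
      _ = ∑ _k ∈ Finset.range n, ∫ x, Real.log (‖γ x‖) ∂μ :=
          Finset.sum_congr rfl fun k _ => hiter k
      _ = (n : ℝ) * ∫ x, Real.log (‖γ x‖) ∂μ := by
          simp [Finset.sum_const]
  -- final estimate
  set L : ℝ := ∫ x, Real.log (‖γ x‖) ∂μ with hL
  have hfinal : ∀ n ≥ max N 1, |(1 / (n:ℝ)) * ∫ x, Real.log ‖An n x‖ ∂μ - L| ≤ C / n := by
    intro n hn
    have hnN : n ≥ N := le_trans (le_max_left _ _) hn
    have hn1 : 1 ≤ n := le_trans (le_max_right _ _) hn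
    have hnpos : (0:ℝ) < n := by exact_mod_cast hn1
    have hint1 : |∫ x, Real.log ‖An n x‖ ∂μ - ∫ x, Real.log (‖gp n x‖) ∂μ| ≤ C := by
      rw [← integral_sub (hintAn n) (hintg n)]
      calc |∫ x, (Real.log ‖An n x‖ - Real.log (‖gp n x‖)) ∂μ|
          = ‖∫ x, (Real.log ‖An n x‖ - Real.log (‖gp n x‖)) ∂μ‖ :=
            (Real.norm_eq_abs _).symm
        _ ≤ ∫ x, ‖Real.log ‖An n x‖ - Real.log (‖gp n x‖)‖ ∂μ :=
            norm_integral_le_integral_norm _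
        _ ≤ ∫ _x, C ∂μ := integral_mono ((hintAn n).sub (hintg n)).norm
            (integrable_const C) (fun x => by
              rw [Real.norm_eq_abs]; exact hkey n hnN x)
        _ = C := by simp
    rw [hgint n, hL] at hint1
    have heq : (1 / (n:ℝ)) * ∫ x, Real.log ‖An n x‖ ∂μ - L
        = (1 / (n:ℝ)) * ((∫ x, Real.log ‖An n x‖ ∂μ) - (n:ℝ) * L) := by
      field_simp
    rw [heq, abs_mul, abs_of_pos (by positivity : (0:ℝ) < 1 / (n:ℝ))]
    rw [div_eq_mul_inv C, mul_comm C]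
    rw [one_div]
    exact mul_le_mul_of_nonneg_left hint1 (by positivity)
  rw [← tendsto_sub_nhds_zero_iff]
  apply squeeze_zero_norm' (a := fun n : ℕ => C / n)
  · filter_upwards [eventually_ge_atTop (max N 1)] with n hn
    rw [Real.norm_eq_abs]
    exact hfinal n hn
  · exact tendsto_const_div_atTop_nhds_zero_nat C
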